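/- arXiv:math/0507603 — 4 statements merged into one kernel-verified Lean document; each statement's English description precedes it below -/
import Mathlib

section
/- Let X be a real normed space and let (X_n) be an increasing sequence of linear subspaces of X such that ⋃_{n=1}^∞ X_n is dense in X. Suppose each X_n carries a norm ‖·‖_n making (X_n,‖·‖_n) a normed space, and suppose lim_{n→∞} sup_{x ∈ X_n ∩ S_X} |1 − ‖x‖_n| = 0, where S_X is the unit sphere of X. For each n let ρ_n ∈ R(S_{(X_n,‖·‖_n)}), the rendezvous interval of the unit sphere of (X_n,‖·‖_n) with kernel the ‖·‖_n-distance. Then every accumulation point ρ of the sequence (ρ_n) belongs to R(S_X), the rendezvous interval of S_X with kernel k(x,y) := ‖x−y‖. -/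
open MeasureTheory ENNReal
open scoped BigOperators

namespace Rendezvous

variable {X : Type*}

/-- The `n`-th Chebyshev constant `Mₙ(H,L)` of `L` with respect to `H` for the kernel `k`. -/
noncomputable def chebMn (k : X → X → ℝ≥0∞) (n : ℕ) (H L : Set X) : ℝ≥0∞ :=
  ⨆ w : Fin n → H, ⨅ x : L, (∑ j, k (x : X) ((w j : X))) / (n : ℝ≥0∞)

/-- The `n`-th dual Chebyshev constant `M̄ₙ(H,L)`. -/
noncomputable def chebMnDual (k : X → X → ℝ≥0∞) (n : ℕ) (H L : Set X) : ℝ≥0∞ :=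
  ⨅ w : Fin n → H, ⨆ x : L, (∑ j, k (x : X) ((w j : X))) / (n : ℝ≥0∞)

/-- The Chebyshev constant `M(H,L) = sup_{n ≥ 1} Mₙ(H,L)`. -/
noncomputable def chebM (k : X → X → ℝ≥0∞) (H L : Set X) : ℝ≥0∞ :=
  ⨆ n : ℕ, ⨆ (_ : 1 ≤ n), chebMn k n H L

/-- The dual Chebyshev constant `M̄(H,L) = inf_{n ≥ 1} M̄ₙ(H,L)`. -/
noncomputable def chebMDual (k : X → X → ℝ≥0∞) (H L : Set X) : ℝ≥0∞ :=
  ⨅ n : ℕ, ⨅ (_ : 1 ≤ n), chebMnDual k n H L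

/-- The potential `U^μ(x) = ∫ k(x,y) dμ(y)` of a measure. -/
noncomputable def pot [MeasurableSpace X] (k : X → X → ℝ≥0∞) (μ : Measure X) (x : X) : ℝ≥0∞ :=
  ∫⁻ y, k x y ∂μ

/-- `μ` is a tight (inner regular w.r.t. compact sets) Borel probability measure
concentrated on `H`. -/
def TightProbOn [TopologicalSpace X] [MeasurableSpace X] (μ : Measure X) (H : Set X) : Prop :=
  IsProbabilityMeasure μ ∧ μ.InnerRegular ∧ μ Hᶜ = 0

/-- The quasi-uniform energy `q(H,L) = inf_{μ ∈ M₁(H)} sup_{x ∈ L} U^μ(x)`. -/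
noncomputable def qUp [TopologicalSpace X] [MeasurableSpace X] (k : X → X → ℝ≥0∞)
    (H L : Set X) : ℝ≥0∞ :=
  ⨅ (μ : Measure X) (_ : TightProbOn μ H), ⨆ x : L, pot k μ (x : X)

/-- The dual quasi-uniform energy `q̲(H,L) = sup_{μ ∈ M₁(H)} inf_{x ∈ L} U^μ(x)`. -/
noncomputable def qLow [TopologicalSpace X] [MeasurableSpace X] (k : X → X → ℝ≥0∞)
    (H L : Set X) : ℝ≥0∞ :=
  ⨆ (μ : Measure X) (_ : TightProbOn μ H), ⨅ x : L, pot k μ (x : X)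

end Rendezvous

open Rendezvous

section RendAux

lemma aux_nonneg {X : Type*} [NormedAddCommGroup X] [NormedSpace ℝ X] (V : Submodule ℝ X)
    (Nf : X → ℝ) (h0 : Nf 0 = 0)
    (hadd : ∀ x ∈ V, ∀ y ∈ V, Nf (x + y) ≤ Nf x + Nf y)
    (hs : ∀ x ∈ V, ∀ c : ℝ, Nf (c • x) = |c| * Nf x) :
    ∀ z ∈ V, 0 ≤ Nf z := by
  intro z hz
  have h1 : Nf (-z) = Nf z := by
    have := hs z hz (-1); simpa using this
  have h2 : Nf (z + -z) ≤ Nf z + Nf (-z) := hadd z hz (-z) (V.neg_mem hz)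
  rw [add_neg_cancel, h0, h1] at h2
  linarith

lemma aux_comp {X : Type*} [NormedAddCommGroup X] [NormedSpace ℝ X] (V : Submodule ℝ X)
    (Nf : X → ℝ) (h0 : Nf 0 = 0)
    (hs : ∀ x ∈ V, ∀ c : ℝ, Nf (c • x) = |c| * Nf x)
    (ε : ℝ) (hm : ∀ x ∈ V, ‖x‖ = 1 → |1 - Nf x| ≤ ε) :
    ∀ z ∈ V, |‖z‖ - Nf z| ≤ ε * ‖z‖ := by
  intro z hz
  rcases eq_or_ne z 0 with rfl | hz0
  · simp [h0]
  · set u := ‖z‖⁻¹ • z with hu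
    have hun : ‖u‖ = 1 := by
      rw [hu, norm_smul]
      simp [norm_inv, inv_mul_cancel₀ (norm_ne_zero_iff.2 hz0)]
    have huV : u ∈ V := V.smul_mem _ hz
    have hzu : z = ‖z‖ • u := by
      rw [hu, smul_smul, mul_inv_cancel₀ (norm_ne_zero_iff.2 hz0), one_smul]
    have hNz : Nf z = ‖z‖ * Nf u := by
      conv_lhs => rw [hzu]
      rw [hs u huV ‖z‖, abs_of_nonneg (norm_nonneg z)]
    have := hm u huV hun
    have : |‖z‖ - Nf z| = ‖z‖ * |1 - Nf u| := by
      rw [hNz, ← mul_one_sub, abs_mul, abs_of_nonneg (norm_nonneg z)]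
    rw [this]
    calc ‖z‖ * |1 - Nf u| ≤ ‖z‖ * ε := by
          exact mul_le_mul_of_nonneg_left (hm u huV hun) (norm_nonneg z)
      _ = ε * ‖z‖ := mul_comm _ _

lemma aux_core {X : Type*} [NormedAddCommGroup X] [NormedSpace ℝ X]
    (E : ℕ → Submodule ℝ X) (hmono : Monotone E)
    (hdense : Dense (⋃ n, (E n : Set X)))
    (N : ℕ → X → ℝ)
    (hN_zero : ∀ n, ∀ x ∈ E n, (N n x = 0 ↔ x = 0))
    (hN_add : ∀ n, ∀ x ∈ E n, ∀ y ∈ E n, N n (x + y) ≤ N n x + N n y)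
    (hN_smul : ∀ n, ∀ x ∈ E n, ∀ c : ℝ, N n (c • x) = |c| * N n x)
    (hN_conv : ∀ ε > (0 : ℝ), ∃ n₀ : ℕ, ∀ n ≥ n₀, ∀ x ∈ E n, ‖x‖ = 1 → |1 - N n x| ≤ ε)
    (εr : ℝ) (hε0 : 0 < εr) (hε2 : εr ≤ 1/2) (n : ℕ)
    (w : Fin n → Metric.sphere (0 : X) 1) :
    ∃ m₀ : ℕ, ∀ m ≥ m₀, ∃ w' : Fin n → X,
      (∀ j, w' j ∈ E m ∧ N m (w' j) = 1) ∧
      (∀ x : X, x ∈ E m → N m x = 1 →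
        ∃ xh : X, ‖xh‖ = 1 ∧
          ∀ j, |N m (x - w' j) - ‖xh - (w j : X)‖| ≤ 29 * εr) := by
  classical
  obtain ⟨n₀, hn₀⟩ := hN_conv εr hε0
  have hN0 : ∀ m, N m 0 = 0 := fun m => (hN_zero m 0 (zero_mem _)).mpr rfl
  have hw : ∀ j, ‖(w j : X)‖ = 1 := fun j => mem_sphere_zero_iff_norm.1 (w j).2
  -- choose approximations y j from the union
  have hy : ∀ j : Fin n, ∃ y : X, ∃ k : ℕ, y ∈ E k ∧ dist (w j : X) y < εr := by
    intro j
    have := Metric.mem_closure_iff.1 (hdense (w j : X)) εr hε0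
    obtain ⟨y, hyU, hyd⟩ := this
    obtain ⟨s, ⟨k, rfl⟩, hyk⟩ := hyU
    exact ⟨y, k, hyk, hyd⟩
  choose y k hyk hyd using hy
  refine ⟨max n₀ (Finset.univ.sup k), fun m hm => ?_⟩
  have hmn₀ : n₀ ≤ m := le_trans (le_max_left _ _) hm
  have hyE : ∀ j, y j ∈ E m := fun j =>
    hmono (le_trans (Finset.le_sup (Finset.mem_univ j)) (le_trans (le_max_right _ _) hm)) (hyk j)
  have hcomp : ∀ z ∈ E m, |‖z‖ - N m z| ≤ εr * ‖z‖ :=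
    aux_comp (E m) (N m) (hN0 m) (hN_smul m) εr (hn₀ m hmn₀)
  -- basic norm bounds for y j
  have hyn1 : ∀ j, 1 - εr ≤ ‖y j‖ ∧ ‖y j‖ ≤ 1 + εr := by
    intro j
    have h1 := abs_norm_sub_norm_le ((w j : X)) (y j)
    rw [← dist_eq_norm] at h1
    have := (hyd j).le
    rw [hw j] at h1
    constructor <;> [skip; skip] <;> cases' abs_le.1 h1 with ha hb <;> linarith
  have hNy : ∀ j, 1/4 ≤ N m (y j) := by
    intro j
    have h := hcomp (y j) (hyE j)
    have h2 := (hyn1 j).1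
    have h3 := (hyn1 j).2
    cases' abs_le.1 h with ha hb
    nlinarith
  set w' : Fin n → X := fun j => (N m (y j))⁻¹ • y j with hw'def
  have hNypos : ∀ j, 0 < N m (y j) := fun j => lt_of_lt_of_le (by norm_num) (hNy j)
  have hw'E : ∀ j, w' j ∈ E m := fun j => (E m).smul_mem _ (hyE j)
  have hw'N : ∀ j, N m (w' j) = 1 := by
    intro j
    rw [hw'def]
    simp only
    rw [hN_smul m (y j) (hyE j), abs_of_pos (inv_pos.2 (hNypos j)),
      inv_mul_cancel₀ (ne_of_gt (hNypos j))]
  -- ‖w j - w' j‖ ≤ 16 εr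
  have hww' : ∀ j, ‖(w j : X) - w' j‖ ≤ 16 * εr := by
    intro j
    have hNy1 : |1 - N m (y j)| ≤ 5/2 * εr := by
      have h := hcomp (y j) (hyE j)
      have h2 := (hyn1 j).1
      have h3 := (hyn1 j).2
      cases' abs_le.1 h with ha hb
      rw [abs_le]
      constructor <;> nlinarith
    have hw'y : ‖w' j - y j‖ ≤ 15 * εr := by
      have : w' j - y j = ((N m (y j))⁻¹ - 1) • y j := by
        rw [hw'def]; simp only; rw [sub_smul, one_smul]
      rw [this, norm_smul, Real.norm_eq_abs]
      have habs : |(N m (y j))⁻¹ - 1| ≤ 10 * εr := by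
        have hne : N m (y j) ≠ 0 := ne_of_gt (hNypos j)
        have : (N m (y j))⁻¹ - 1 = (1 - N m (y j)) / N m (y j) := by
          field_simp
        rw [this, abs_div, abs_of_pos (hNypos j)]
        rw [div_le_iff₀ (hNypos j)]
        have := hNy j
        cases' abs_le.1 hNy1 with ha hb
        nlinarith [abs_nonneg (1 - N m (y j)), abs_le.1 hNy1]
      have h3 := (hyn1 j).2
      nlinarith [norm_nonneg (y j), abs_nonneg ((N m (y j))⁻¹ - 1)]
    calc ‖(w j : X) - w' j‖ ≤ ‖(w j : X) - y j‖ + ‖y j - w' j‖ := norm_sub_le_norm_sub_add_norm_sub _ _ _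
      _ ≤ εr + 15 * εr := by
          refine add_le_add ?_ ?_
          · rw [← dist_eq_norm]; exact (hyd j).le
          · rw [norm_sub_rev]; exact hw'y
      _ = 16 * εr := by ring
  refine ⟨w', fun j => ⟨hw'E j, hw'N j⟩, ?_⟩
  intro x hxE hxN
  have hx0 : x ≠ 0 := by
    intro h; rw [h, hN0 m] at hxN; norm_num at hxN
  have hxnorm : ‖x‖ ≤ 2 := by
    have h := hcomp x hxE
    rw [hxN] at h
    cases' abs_le.1 h with ha hb
    nlinarith [norm_nonneg x]
  have hxnorm1 : |‖x‖ - 1| ≤ 2 * εr := by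
    have h := hcomp x hxE
    rw [hxN] at h
    cases' abs_le.1 h with ha hb
    rw [abs_le]; constructor <;> nlinarith [norm_nonneg x]
  set xh : X := ‖x‖⁻¹ • x with hxhdef
  have hxh1 : ‖xh‖ = 1 := by
    rw [hxhdef, norm_smul, norm_inv, norm_norm, inv_mul_cancel₀ (norm_ne_zero_iff.2 hx0)]
  refine ⟨xh, hxh1, fun j => ?_⟩
  have hxxh : ‖x - xh‖ ≤ 2 * εr := by
    have : x - xh = (1 - ‖x‖⁻¹) • x := by
      rw [hxhdef, sub_smul, one_smul]
    rw [this, norm_smul, Real.norm_eq_abs]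
    have hxpos : 0 < ‖x‖ := norm_pos_iff.2 hx0
    have : |1 - ‖x‖⁻¹| * ‖x‖ = |‖x‖ - 1| := by
      rw [← abs_of_pos hxpos, ← abs_mul]
      congr 1
      field_simp
      rw [abs_of_pos hxpos]; ring
    rw [this]
    exact hxnorm1
  have hw'norm : ‖w' j‖ ≤ 2 := by
    have h := hcomp (w' j) (hw'E j)
    rw [hw'N j] at h
    cases' abs_le.1 h with ha hb
    nlinarith [norm_nonneg (w' j)]
  have h1 : |N m (x - w' j) - ‖x - w' j‖| ≤ 4 * εr := by
    have h := hcomp (x - w' j) ((E m).sub_mem hxE (hw'E j))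
    have hn : ‖x - w' j‖ ≤ 4 := le_trans (norm_sub_le _ _) (by linarith)
    rw [abs_sub_comm] at h
    calc |N m (x - w' j) - ‖x - w' j‖| ≤ εr * ‖x - w' j‖ := h
      _ ≤ 4 * εr := by nlinarith
  have h2 : |‖x - w' j‖ - ‖xh - (w j : X)‖| ≤ 18 * εr := by
    have htri : |‖x - w' j‖ - ‖xh - (w j : X)‖| ≤ ‖(x - w' j) - (xh - (w j : X))‖ :=
      abs_norm_sub_norm_le _ _
    have heq : (x - w' j) - (xh - (w j : X)) = (x - xh) + ((w j : X) - w' j) := by abel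
    calc |‖x - w' j‖ - ‖xh - (w j : X)‖| ≤ ‖(x - xh) + ((w j : X) - w' j)‖ := by rw [← heq]; exact htri
      _ ≤ ‖x - xh‖ + ‖(w j : X) - w' j‖ := norm_add_le _ _
      _ ≤ 2 * εr + 16 * εr := add_le_add hxxh (hww' j)
      _ = 18 * εr := by ring
  calc |N m (x - w' j) - ‖xh - (w j : X)‖|
      ≤ |N m (x - w' j) - ‖x - w' j‖| + |‖x - w' j‖ - ‖xh - (w j : X)‖| := abs_sub_le _ _ _
    _ ≤ 4 * εr + 18 * εr := add_le_add h1 h2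
    _ ≤ 29 * εr := by linarith

private lemma aux_avg_le {n : ℕ} (hn : 1 ≤ n) (a b : Fin n → ℝ) (c : ℝ)
    (h : ∀ j, a j ≤ b j + c) : (∑ j, a j) / n ≤ (∑ j, b j) / n + c := by
  have hn' : (0:ℝ) < n := by exact_mod_cast hn
  have h1 : (∑ j, a j) ≤ (∑ j, b j) + n * c := by
    calc ∑ j, a j ≤ ∑ j, (b j + c) := Finset.sum_le_sum (fun j _ => h j)
      _ = (∑ j, b j) + n * c := by
          rw [Finset.sum_add_distrib, Finset.sum_const, Finset.card_univ, Fintype.card_fin,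
            nsmul_eq_mul]
  calc (∑ j, a j) / n ≤ ((∑ j, b j) + n * c) / n := by gcongr
    _ = (∑ j, b j) / n + c := by rw [add_div, mul_div_cancel_left₀ _ (ne_of_gt hn')]

private lemma aux_avgE {n : ℕ} (hn : 1 ≤ n) (a : Fin n → ℝ) (ha : ∀ j, 0 ≤ a j) :
    (∑ j, ENNReal.ofReal (a j)) / (n : ℝ≥0∞) = ENNReal.ofReal ((∑ j, a j) / n) := by
  have hn' : (0:ℝ) < n := by exact_mod_cast hn
  rw [ENNReal.ofReal_div_of_pos hn', ENNReal.ofReal_sum_of_nonneg (fun j _ => ha j),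
    ENNReal.ofReal_natCast]

private lemma aux_third (δ : NNReal) :
    (δ : ℝ≥0∞) / 3 = ENNReal.ofReal ((δ : ℝ) / 3) := by
  rw [ENNReal.ofReal_div_of_pos (by norm_num : (0:ℝ) < 3), ENNReal.ofReal_coe_nnreal,
    ENNReal.ofReal_ofNat]

end RendAux

/-- Let `X` be a real normed space, `(X_n)` an increasing sequence of
subspaces with dense union, each carrying its own norm `‖·‖_n`, such that
`sup_{x ∈ X_n ∩ S_X} |1 - ‖x‖_n| → 0`. If `ρ_n` lies in the rendezvous interval of
the unit sphere of `(X_n,‖·‖_n)`, then every accumulation point of `(ρ_n)` lies in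
the rendezvous interval of `S_X`. -/
theorem clusterPoint_mem_rendezvous_interval {X : Type*} [NormedAddCommGroup X]
    [NormedSpace ℝ X]
    (E : ℕ → Submodule ℝ X) (hmono : Monotone E)
    (hdense : Dense (⋃ n, (E n : Set X)))
    (N : ℕ → X → ℝ)
    (hN_zero : ∀ n, ∀ x ∈ E n, (N n x = 0 ↔ x = 0))
    (hN_add : ∀ n, ∀ x ∈ E n, ∀ y ∈ E n, N n (x + y) ≤ N n x + N n y)
    (hN_smul : ∀ n, ∀ x ∈ E n, ∀ c : ℝ, N n (c • x) = |c| * N n x)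
    (hN_conv : ∀ ε > (0 : ℝ), ∃ n₀ : ℕ, ∀ n ≥ n₀, ∀ x ∈ E n, ‖x‖ = 1 → |1 - N n x| ≤ ε)
    (ρ : ℕ → ℝ≥0∞)
    (hρ : ∀ n : ℕ,
      chebM (fun x y : X => ENNReal.ofReal (N n (x - y)))
          {x : X | x ∈ E n ∧ N n x = 1} {x : X | x ∈ E n ∧ N n x = 1} ≤ ρ n ∧
      ρ n ≤ chebMDual (fun x y : X => ENNReal.ofReal (N n (x - y)))
          {x : X | x ∈ E n ∧ N n x = 1} {x : X | x ∈ E n ∧ N n x = 1})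
    (r : ℝ≥0∞) (hr : MapClusterPt r Filter.atTop ρ) :
    chebM (fun x y : X => edist x y) (Metric.sphere (0 : X) 1) (Metric.sphere (0 : X) 1) ≤ r ∧
    r ≤ chebMDual (fun x y : X => edist x y) (Metric.sphere (0 : X) 1)
        (Metric.sphere (0 : X) 1) := by

  classical
  by_cases hX : ∀ x : X, x = 0
  · have hsE : IsEmpty (Metric.sphere (0:X) 1) := by
      constructor
      rintro ⟨x, hx⟩
      rw [mem_sphere_zero_iff_norm] at hx
      rw [hX x] at hx
      simp at hx
    constructor
    · simp only [chebM]
      refine iSup₂_le fun n hn => ?_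
      haveI : Nonempty (Fin n) := ⟨⟨0, hn⟩⟩
      simp only [chebMn]
      rw [iSup_of_empty]
      exact zero_le
    · simp only [chebMDual]
      refine le_iInf₂ fun n hn => ?_
      haveI : Nonempty (Fin n) := ⟨⟨0, hn⟩⟩
      simp only [chebMnDual]
      rw [iInf_of_empty]
      exact le_top
  push_neg at hX
  obtain ⟨x₀, hx₀⟩ := hX
  have hN0 : ∀ m, N m 0 = 0 := fun m => (hN_zero m 0 (zero_mem _)).mpr rfl
  have hNneg : ∀ m, ∀ z ∈ E m, 0 ≤ N m z := fun m =>
    aux_nonneg (E m) (N m) (hN0 m) (hN_add m) (hN_smul m)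
  -- a nonzero element of some E n₁
  obtain ⟨n₁, v, hv, hv0⟩ : ∃ n₁ : ℕ, ∃ v : X, v ∈ E n₁ ∧ v ≠ 0 := by
    obtain ⟨y, hyU, hyd⟩ :=
      Metric.mem_closure_iff.1 (hdense x₀) ‖x₀‖ (norm_pos_iff.2 hx₀)
    obtain ⟨s, ⟨kk, rfl⟩, hyk⟩ := hyU
    refine ⟨kk, y, hyk, fun h => ?_⟩
    rw [h, dist_zero_right] at hyd
    exact lt_irrefl _ hyd
  have hbound : ∀ m ≥ n₁, ρ m ≤ ENNReal.ofReal 2 := by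
    intro m hm
    have hvE : v ∈ E m := hmono hm hv
    have hNvpos : 0 < N m v :=
      lt_of_le_of_ne (hNneg m v hvE) (fun h => hv0 ((hN_zero m v hvE).1 h.symm))
    set w₀ : X := (N m v)⁻¹ • v with hw₀def
    have hw₀E : w₀ ∈ E m := (E m).smul_mem _ hvE
    have hw₀N : N m w₀ = 1 := by
      rw [hw₀def, hN_smul m v hvE, abs_of_pos (inv_pos.2 hNvpos),
        inv_mul_cancel₀ (ne_of_gt hNvpos)]
    refine le_trans (hρ m).2 ?_
    simp only [chebMDual]
    refine le_trans (iInf₂_le 1 le_rfl) ?_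
    simp only [chebMnDual]
    refine le_trans (iInf_le _ (fun _ => ⟨w₀, hw₀E, hw₀N⟩)) ?_
    refine iSup_le fun x => ?_
    have hx2 := x.2
    simp only [Set.mem_setOf_eq] at hx2
    have h1 : N m ((x:X) - w₀) ≤ N m (x:X) + N m (-w₀) := by
      rw [sub_eq_add_neg]
      exact hN_add m (x:X) hx2.1 (-w₀) ((E m).neg_mem hw₀E)
    have h2 : N m (-w₀) = N m w₀ := by
      have := hN_smul m w₀ hw₀E (-1)
      simpa using this
    rw [hx2.2, h2, hw₀N] at h1
    calc (∑ j : Fin 1, ENNReal.ofReal (N m ((x:X) - w₀))) / ((1:ℕ) : ℝ≥0∞)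
        = ENNReal.ofReal (N m ((x:X) - w₀)) := by simp
      _ ≤ ENNReal.ofReal 2 := ENNReal.ofReal_le_ofReal (by linarith)
  have hr2 : r ≤ ENNReal.ofReal 2 := by
    by_contra h
    push_neg at h
    obtain ⟨m, hm, h2⟩ :=
      Filter.frequently_atTop.1 ((mapClusterPt_iff_frequently.1 hr) _ (Ioi_mem_nhds h)) n₁
    exact absurd (hbound m hm) (not_le.2 h2)
  have hrT : r ≠ ⊤ := ne_top_of_le_ne_top ENNReal.ofReal_ne_top hr2
  constructor
  · -- Part 1 : chebM ≤ r
    simp only [chebM]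
    refine iSup₂_le fun n hn => ?_
    simp only [chebMn]
    refine iSup_le fun w => ?_
    refine ENNReal.le_of_forall_pos_le_add fun δ hδ _ => ?_
    have hδR : (0:ℝ) < (δ:ℝ) := hδ
    set εr : ℝ := min (1/2) ((δ:ℝ)/100) with hεrdef
    have hεr0 : 0 < εr := lt_min (by norm_num) (by positivity)
    have hεr29 : 29 * εr ≤ (δ:ℝ)/3 := by
      have h1 : εr ≤ (δ:ℝ)/100 := min_le_right _ _
      linarith
    obtain ⟨m₀, hm₀⟩ := aux_core E hmono hdense N hN_zero hN_add hN_smul hN_conv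
      εr hεr0 (min_le_left _ _) n w
    set c : ℝ≥0∞ := (δ : ℝ≥0∞) / 3 with hcdef
    have hc0 : c ≠ 0 := by
      rw [hcdef]
      exact ENNReal.div_ne_zero.2 ⟨ENNReal.coe_ne_zero.2 (ne_of_gt hδ), ENNReal.ofNat_ne_top⟩
    have hcT : c ≠ ⊤ := by
      rw [hcdef]
      exact (ENNReal.div_lt_top ENNReal.coe_ne_top (by norm_num)).ne
    have hofc : ENNReal.ofReal (29 * εr) ≤ c := by
      rw [hcdef, aux_third]
      exact ENNReal.ofReal_le_ofReal hεr29
    obtain ⟨m, hmm₀, hρm⟩ :=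
      Filter.frequently_atTop.1 ((mapClusterPt_iff_frequently.1 hr) _
        (Iio_mem_nhds (ENNReal.lt_add_right hrT hc0))) m₀
    rw [Set.mem_Iio] at hρm
    obtain ⟨w', hw'S, hkey⟩ := hm₀ m hmm₀
    set W : Fin n → ↥{x : X | x ∈ E m ∧ N m x = 1} :=
      fun j => ⟨w' j, (hw'S j).1, (hw'S j).2⟩ with hWdef
    have hchain : (⨅ x : ↥{x : X | x ∈ E m ∧ N m x = 1},
        (∑ j, ENNReal.ofReal (N m ((x:X) - ((W j : X))))) / (n : ℝ≥0∞)) ≤ ρ m := by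
      refine le_trans ?_ (hρ m).1
      simp only [chebM]
      refine le_trans ?_ (le_iSup₂ (f := fun (n' : ℕ) (_ : 1 ≤ n') =>
        chebMn (fun x y : X => ENNReal.ofReal (N m (x - y))) n'
          {x : X | x ∈ E m ∧ N m x = 1} {x : X | x ∈ E m ∧ N m x = 1}) n hn)
      simp only [chebMn]
      exact le_iSup (fun ww : Fin n → ↥{x : X | x ∈ E m ∧ N m x = 1} =>
        ⨅ x : ↥{x : X | x ∈ E m ∧ N m x = 1},
          (∑ j, ENNReal.ofReal (N m ((x:X) - (ww j : X)))) / (n : ℝ≥0∞)) W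
    obtain ⟨x, hx⟩ := iInf_lt_iff.1 (lt_of_le_of_lt hchain hρm)
    have hx2 := x.2
    simp only [Set.mem_setOf_eq] at hx2
    obtain ⟨xh, hxh1, hxhkey⟩ := hkey (x:X) hx2.1 hx2.2
    have hNnn : ∀ j : Fin n, 0 ≤ N m ((x:X) - (W j : X)) := fun j =>
      hNneg m _ ((E m).sub_mem hx2.1 (hw'S j).1)
    have hreal : (∑ j, ‖xh - (w j : X)‖) / (n:ℝ)
        ≤ (∑ j, N m ((x:X) - (W j : X))) / n + 29 * εr := by
      refine aux_avg_le hn _ _ _ fun j => ?_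
      cases' abs_le.1 (hxhkey j) with ha hb
      linarith
    calc (⨅ xx : ↥(Metric.sphere (0:X) 1), (∑ j, edist (xx:X) ((w j : X))) / (n:ℝ≥0∞))
        ≤ (∑ j, edist xh ((w j : X))) / (n:ℝ≥0∞) :=
          iInf_le _ (⟨xh, mem_sphere_zero_iff_norm.2 hxh1⟩ : ↥(Metric.sphere (0:X) 1))
      _ = ENNReal.ofReal ((∑ j, ‖xh - (w j : X)‖) / n) := by
          rw [← aux_avgE hn _ (fun j => norm_nonneg (xh - (w j : X)))]
          congr 1
          refine Finset.sum_congr rfl fun j _ => ?_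
          rw [edist_dist, dist_eq_norm]
      _ ≤ ENNReal.ofReal ((∑ j, N m ((x:X) - (W j : X))) / n + 29 * εr) :=
          ENNReal.ofReal_le_ofReal hreal
      _ ≤ ENNReal.ofReal ((∑ j, N m ((x:X) - (W j : X))) / n) + ENNReal.ofReal (29 * εr) :=
          ENNReal.ofReal_add_le
      _ ≤ (r + c) + c := by
          refine add_le_add ?_ hofc
          rw [← aux_avgE hn _ hNnn]
          exact hx.le
      _ ≤ r + (δ:ℝ≥0∞) := by
          rw [add_assoc]
          refine add_le_add_right ?_ r
          calc c + c ≤ c + c + c := le_self_add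
            _ = (δ:ℝ≥0∞) := by rw [hcdef]; exact ENNReal.add_thirds _
  · -- Part 2 : r ≤ chebMDual
    simp only [chebMDual]
    refine le_iInf₂ fun n hn => ?_
    simp only [chebMnDual]
    refine le_iInf fun w => ?_
    refine ENNReal.le_of_forall_pos_le_add fun δ hδ _ => ?_
    by_cases hrδ : r ≤ (δ:ℝ≥0∞)
    · exact le_trans hrδ le_add_self
    push_neg at hrδ
    have hr0 : r ≠ 0 := by
      intro h
      rw [h] at hrδ
      exact (not_lt_of_ge zero_le) hrδ
    have hδR : (0:ℝ) < (δ:ℝ) := hδ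
    set εr : ℝ := min (1/2) ((δ:ℝ)/100) with hεrdef
    have hεr0 : 0 < εr := lt_min (by norm_num) (by positivity)
    have hεr29 : 29 * εr ≤ (δ:ℝ)/3 := by
      have h1 : εr ≤ (δ:ℝ)/100 := min_le_right _ _
      linarith
    obtain ⟨m₀, hm₀⟩ := aux_core E hmono hdense N hN_zero hN_add hN_smul hN_conv
      εr hεr0 (min_le_left _ _) n w
    set c : ℝ≥0∞ := (δ : ℝ≥0∞) / 3 with hcdef
    have hc0 : c ≠ 0 := by
      rw [hcdef]
      exact ENNReal.div_ne_zero.2 ⟨ENNReal.coe_ne_zero.2 (ne_of_gt hδ), ENNReal.ofNat_ne_top⟩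
    have hcT : c ≠ ⊤ := by
      rw [hcdef]
      exact (ENNReal.div_lt_top ENNReal.coe_ne_top (by norm_num)).ne
    have hofc : ENNReal.ofReal (29 * εr) ≤ c := by
      rw [hcdef, aux_third]
      exact ENNReal.ofReal_le_ofReal hεr29
    have hccδ : c + c ≤ (δ:ℝ≥0∞) := by
      calc c + c ≤ c + c + c := le_self_add
        _ = (δ:ℝ≥0∞) := by rw [hcdef]; exact ENNReal.add_thirds _
    have hcδ : c ≤ (δ:ℝ≥0∞) := le_trans le_self_add hccδ
    have hcr : c ≤ r := le_trans hcδ hrδ.le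
    obtain ⟨m, hm, hρm⟩ :=
      Filter.frequently_atTop.1 ((mapClusterPt_iff_frequently.1 hr) _
        (Ioi_mem_nhds (ENNReal.sub_lt_self hrT hr0 hc0))) m₀
    rw [Set.mem_Ioi] at hρm
    have hrρ : r ≤ ρ m + c := by
      have h := ENNReal.add_lt_add_right hcT hρm
      rw [tsub_add_cancel_of_le hcr] at h
      exact h.le
    obtain ⟨w', hw'S, hkey⟩ := hm₀ m hm
    set W : Fin n → ↥{x : X | x ∈ E m ∧ N m x = 1} :=
      fun j => ⟨w' j, (hw'S j).1, (hw'S j).2⟩ with hWdef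
    have hchain : ρ m ≤ ⨆ x : ↥{x : X | x ∈ E m ∧ N m x = 1},
        (∑ j, ENNReal.ofReal (N m ((x:X) - (W j : X)))) / (n : ℝ≥0∞) := by
      refine le_trans (hρ m).2 ?_
      simp only [chebMDual]
      refine le_trans (iInf₂_le n hn) ?_
      simp only [chebMnDual]
      exact iInf_le (fun ww : Fin n → ↥{x : X | x ∈ E m ∧ N m x = 1} =>
        ⨆ x : ↥{x : X | x ∈ E m ∧ N m x = 1},
          (∑ j, ENNReal.ofReal (N m ((x:X) - (ww j : X)))) / (n : ℝ≥0∞)) W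
    have hsup : (⨆ x : ↥{x : X | x ∈ E m ∧ N m x = 1},
        (∑ j, ENNReal.ofReal (N m ((x:X) - (W j : X)))) / (n : ℝ≥0∞))
        ≤ (⨆ xx : ↥(Metric.sphere (0:X) 1),
            (∑ j, edist (xx:X) ((w j : X))) / (n:ℝ≥0∞)) + c := by
      refine iSup_le fun x => ?_
      have hx2 := x.2
      simp only [Set.mem_setOf_eq] at hx2
      obtain ⟨xh, hxh1, hxhkey⟩ := hkey (x:X) hx2.1 hx2.2
      have hNnn : ∀ j : Fin n, 0 ≤ N m ((x:X) - (W j : X)) := fun j =>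
        hNneg m _ ((E m).sub_mem hx2.1 (hw'S j).1)
      have hreal : (∑ j, N m ((x:X) - (W j : X))) / (n:ℝ)
          ≤ (∑ j, ‖xh - (w j : X)‖) / n + 29 * εr := by
        refine aux_avg_le hn _ _ _ fun j => ?_
        cases' abs_le.1 (hxhkey j) with ha hb
        linarith
      calc (∑ j, ENNReal.ofReal (N m ((x:X) - (W j : X)))) / (n : ℝ≥0∞)
          = ENNReal.ofReal ((∑ j, N m ((x:X) - (W j : X))) / n) := aux_avgE hn _ hNnn
        _ ≤ ENNReal.ofReal ((∑ j, ‖xh - (w j : X)‖) / n + 29 * εr) :=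
            ENNReal.ofReal_le_ofReal hreal
        _ ≤ ENNReal.ofReal ((∑ j, ‖xh - (w j : X)‖) / n) + ENNReal.ofReal (29 * εr) :=
            ENNReal.ofReal_add_le
        _ ≤ (⨆ xx : ↥(Metric.sphere (0:X) 1),
              (∑ j, edist (xx:X) ((w j : X))) / (n:ℝ≥0∞)) + c := by
            refine add_le_add ?_ hofc
            have heq : ENNReal.ofReal ((∑ j, ‖xh - (w j : X)‖) / n)
                = (∑ j, edist xh ((w j : X))) / (n:ℝ≥0∞) := by
              rw [← aux_avgE hn _ (fun j => norm_nonneg (xh - (w j : X)))]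
              congr 1
              refine Finset.sum_congr rfl fun j _ => ?_
              rw [edist_dist, dist_eq_norm]
            rw [heq]
            exact le_iSup (fun xx : ↥(Metric.sphere (0:X) 1) =>
              (∑ j, edist (xx:X) ((w j : X))) / (n:ℝ≥0∞))
              (⟨xh, mem_sphere_zero_iff_norm.2 hxh1⟩ : ↥(Metric.sphere (0:X) 1))
    calc r ≤ ρ m + c := hrρ
      _ ≤ ((⨆ xx : ↥(Metric.sphere (0:X) 1),
            (∑ j, edist (xx:X) ((w j : X))) / (n:ℝ≥0∞)) + c) + c :=
          add_le_add (hchain.trans hsup) le_rfl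
      _ ≤ (⨆ xx : ↥(Metric.sphere (0:X) 1),
            (∑ j, edist (xx:X) ((w j : X))) / (n:ℝ≥0∞)) + (δ:ℝ≥0∞) := by
          rw [add_assoc]
          exact add_le_add_right hccδ _
end

section
/- Let X be a real normed space and let (X_n) be an increasing sequence of nonzero finite-dimensional linear subspaces of X such that ⋃_{n=1}^∞ X_n is dense in X. For each n let ρ_n ∈ R(S_{X_n}), the rendezvous interval of the unit sphere of X_n (with the norm inherited from X and kernel the norm distance). Then every accumulation point ρ of the sequence (ρ_n) belongs to R(S_X), the rendezvous interval of the unit sphere of X with kernel k(x,y) := ‖x−y‖. -/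
open MeasureTheory ENNReal
open scoped BigOperators NNReal

open Rendezvous

section Aux

private lemma exists_unit_approx {X : Type*} [NormedAddCommGroup X] [NormedSpace ℝ X]
    (E : ℕ → Submodule ℝ X) (hdense : Dense (⋃ n, (E n : Set X)))
    (w : X) (hw : ‖w‖ = 1) {ε : ℝ} (hε : 0 < ε) :
    ∃ N, ∃ v : X, v ∈ E N ∧ ‖v‖ = 1 ∧ dist w v ≤ ε := by
  have hδ : 0 < min (ε / 2) (1 / 2) := lt_min (by linarith) (by norm_num)
  obtain ⟨u, hu1, hu2⟩ := Metric.dense_iff.mp hdense w _ hδ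
  obtain ⟨N, huN⟩ := Set.mem_iUnion.mp hu2
  have hdu : dist w u < min (ε / 2) (1 / 2) := Metric.mem_ball'.mp hu1
  have hnu : |‖u‖ - 1| ≤ dist w u := by
    rw [← hw]
    have := abs_norm_sub_norm_le u w
    rwa [dist_comm, dist_eq_norm] at *
  have hune : u ≠ 0 := by
    intro h
    have hlt : dist w u < 1 / 2 := hdu.trans_le (min_le_right _ _)
    rw [h, dist_zero_right, hw] at hlt
    norm_num at hlt
  refine ⟨N, (‖u‖⁻¹ : ℝ) • u, Submodule.smul_mem _ _ huN,
    norm_smul_inv_norm (𝕜 := ℝ) hune, ?_⟩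
  have hupos : 0 < ‖u‖ := norm_pos_iff.mpr hune
  have hduv : dist u ((‖u‖⁻¹ : ℝ) • u) = |‖u‖ - 1| := by
    rw [dist_eq_norm]
    have : u - (‖u‖⁻¹ : ℝ) • u = (1 - ‖u‖⁻¹) • u := by
      rw [sub_smul, one_smul]
    rw [this, norm_smul, Real.norm_eq_abs,
      show |1 - ‖u‖⁻¹| * ‖u‖ = |(1 - ‖u‖⁻¹) * ‖u‖| by rw [abs_mul, abs_of_pos hupos],
      sub_mul, one_mul, inv_mul_cancel₀ hupos.ne']
  have := dist_triangle w u ((‖u‖⁻¹ : ℝ) • u)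
  rw [hduv] at this
  have h1 : dist w u ≤ ε / 2 := hdu.le.trans (min_le_left _ _)
  have h2 : |‖u‖ - 1| ≤ ε / 2 := hnu.trans h1
  linarith

private lemma avg_edist_le {X : Type*} [NormedAddCommGroup X]
    {m : ℕ} (hm : 1 ≤ m) (x : X) (w v : Fin m → X) {ε : ℝ≥0}
    (h : ∀ j, edist (w j) (v j) ≤ (ε : ℝ≥0∞)) :
    (∑ j, edist x (w j)) / (m : ℝ≥0∞) ≤ (∑ j, edist x (v j)) / (m : ℝ≥0∞) + ε := by
  have hm0 : (m : ℝ≥0∞) ≠ 0 := by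
    exact_mod_cast Nat.cast_ne_zero.mpr (Nat.one_le_iff_ne_zero.mp hm)
  have hmt : (m : ℝ≥0∞) ≠ ⊤ := ENNReal.natCast_ne_top m
  have h1 : (∑ j, edist x (w j)) ≤ (∑ j, edist x (v j)) + (m : ℝ≥0∞) * ε := by
    calc (∑ j, edist x (w j)) ≤ ∑ j, (edist x (v j) + ε) :=
          Finset.sum_le_sum fun j _ =>
            (edist_triangle x (v j) (w j)).trans
              (add_le_add_right ((edist_comm (v j) (w j)) ▸ h j) _)
      _ = (∑ j, edist x (v j)) + (m : ℝ≥0∞) * ε := by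
          rw [Finset.sum_add_distrib, Finset.sum_const, Finset.card_fin, nsmul_eq_mul]
  calc (∑ j, edist x (w j)) / (m : ℝ≥0∞)
      ≤ ((∑ j, edist x (v j)) + (m : ℝ≥0∞) * ε) / (m : ℝ≥0∞) :=
        ENNReal.div_le_div_right h1 _
    _ = (∑ j, edist x (v j)) / (m : ℝ≥0∞) + ε := by
        rw [ENNReal.add_div, mul_comm, mul_div_assoc, ENNReal.div_self hm0 hmt, mul_one]

end Aux

open Filter in
/-- Let `X` be a real normed space and `(X_n)` an increasing sequence
of nonzero finite-dimensional subspaces with dense union. If `ρ_n` lies in the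
rendezvous interval of the unit sphere of `X_n` (with the inherited norm), then every
accumulation point of `(ρ_n)` lies in the rendezvous interval of `S_X`. -/
theorem clusterPoint_mem_rendezvous_interval_of_finiteDimensional {X : Type*}
    [NormedAddCommGroup X] [NormedSpace ℝ X]
    (E : ℕ → Submodule ℝ X) (hmono : Monotone E) (hnz : ∀ n, E n ≠ ⊥)
    (hfd : ∀ n, FiniteDimensional ℝ (E n))
    (hdense : Dense (⋃ n, (E n : Set X)))
    (ρ : ℕ → ℝ≥0∞)
    (hρ : ∀ n : ℕ,
      chebM (fun x y : X => edist x y)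
          {x : X | x ∈ E n ∧ ‖x‖ = 1} {x : X | x ∈ E n ∧ ‖x‖ = 1} ≤ ρ n ∧
      ρ n ≤ chebMDual (fun x y : X => edist x y)
          {x : X | x ∈ E n ∧ ‖x‖ = 1} {x : X | x ∈ E n ∧ ‖x‖ = 1})
    (r : ℝ≥0∞) (hr : MapClusterPt r Filter.atTop ρ) :
    chebM (fun x y : X => edist x y) (Metric.sphere (0 : X) 1) (Metric.sphere (0 : X) 1) ≤ r ∧
    r ≤ chebMDual (fun x y : X => edist x y) (Metric.sphere (0 : X) 1)
        (Metric.sphere (0 : X) 1) := by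
  classical
  set S : Set X := Metric.sphere (0 : X) 1 with hSdef
  have hSmem : ∀ x : X, x ∈ S → ‖x‖ = 1 := fun x hx => mem_sphere_zero_iff_norm.mp hx
  have hTS : ∀ n, {x : X | x ∈ E n ∧ ‖x‖ = 1} ⊆ S := fun n x hx =>
    mem_sphere_zero_iff_norm.mpr hx.2
  have hTne : ∀ n, ∃ x : X, x ∈ E n ∧ ‖x‖ = 1 := by
    intro n
    obtain ⟨x, hxE, hx0⟩ := (Submodule.ne_bot_iff _).mp (hnz n)
    exact ⟨(‖x‖⁻¹ : ℝ) • x, Submodule.smul_mem _ _ hxE, norm_smul_inv_norm (𝕜 := ℝ) hx0⟩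
  have hfreq : ∀ s ∈ nhds r, ∃ᶠ n in Filter.atTop, ρ n ∈ s := mapClusterPt_iff_frequently.mp hr
  constructor
  · -- `chebM ≤ r`
    refine ENNReal.le_of_forall_pos_le_add fun ε hε hrt => ?_
    set δ : ℝ≥0 := ε / 2 with hδdef
    have hδpos : 0 < δ := by positivity
    have hsum : (δ : ℝ≥0∞) + (δ : ℝ≥0∞) = (ε : ℝ≥0∞) := by
      rw [← ENNReal.coe_add, hδdef, add_halves]
    have key : chebM (fun x y : X => edist x y) S S ≤ r + δ + δ := by
      rw [chebM]
      refine iSup_le fun m => iSup_le fun hm => ?_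
      rw [chebMn]
      refine iSup_le fun w => ?_
      have hwj : ∀ j : Fin m, ‖(w j : X)‖ = 1 := fun j => hSmem _ (w j).2
      choose N v hvE hvn hvd using fun j : Fin m =>
        exists_unit_approx E hdense (w j) (hwj j) (ε := (δ : ℝ)) (by exact_mod_cast hδpos)
      set N₀ : ℕ := Finset.univ.sup N with hN₀
      have hlt : r < r + δ :=
        ENNReal.lt_add_right hrt.ne (by exact_mod_cast hδpos.ne')
      obtain ⟨n, hn1, hn2⟩ := ((hfreq _ (Iio_mem_nhds hlt)).and_eventually
        (Filter.eventually_ge_atTop N₀)).exists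
      have hvEn : ∀ j, v j ∈ E n := fun j =>
        hmono ((Finset.le_sup (Finset.mem_univ j)).trans hn2) (hvE j)
      set T : Set X := {x : X | x ∈ E n ∧ ‖x‖ = 1} with hTdef
      set v' : Fin m → T := fun j => ⟨v j, hvEn j, hvn j⟩ with hv'
      have hed : ∀ j, edist (w j : X) (v j) ≤ (δ : ℝ≥0∞) := fun j => by
        rw [edist_dist]
        exact (ENNReal.ofReal_le_ofReal (hvd j)).trans_eq ENNReal.ofReal_coe_nnreal
      have step1 : (⨅ x : S, (∑ j, edist (x : X) ((w j : X))) / (m : ℝ≥0∞))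
          ≤ (⨅ x : T, (∑ j, edist (x : X) (v j)) / (m : ℝ≥0∞)) + δ := by
        rw [ENNReal.iInf_add]
        refine le_iInf fun x => ?_
        exact le_trans (iInf_le _ ⟨(x : X), hTS n x.2⟩)
          (avg_edist_le hm (x : X) (fun j => (w j : X)) v hed)
      have step2 : (⨅ x : T, (∑ j, edist (x : X) (v j)) / (m : ℝ≥0∞))
          ≤ chebMn (fun x y : X => edist x y) m T T := by
        rw [chebMn]; exact le_iSup (fun w' : Fin m → T =>
          ⨅ x : T, (∑ j, edist (x : X) ((w' j : X))) / (m : ℝ≥0∞)) v'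
      have step3 : chebMn (fun x y : X => edist x y) m T T
          ≤ chebM (fun x y : X => edist x y) T T :=
        le_iSup₂ (f := fun (i : ℕ) (_ : 1 ≤ i) =>
          chebMn (fun x y : X => edist x y) i T T) m hm
      calc _ ≤ _ := step1
        _ ≤ chebMn (fun x y : X => edist x y) m T T + δ := add_le_add_left step2 _
        _ ≤ chebM (fun x y : X => edist x y) T T + δ := add_le_add_left step3 _
        _ ≤ ρ n + δ := add_le_add_left (hρ n).1 _
        _ ≤ (r + δ) + δ := add_le_add_left (Set.mem_Iio.mp hn1).le _
    calc chebM (fun x y : X => edist x y) S S ≤ r + δ + δ := key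
      _ = r + ε := by rw [add_assoc, hsum]
  · -- `r ≤ chebMDual`
    refine ENNReal.le_of_forall_pos_le_add fun ε hε hBt => ?_
    set δ : ℝ≥0 := ε / 2 with hδdef
    have hδpos : 0 < δ := by positivity
    have hsum : (δ : ℝ≥0∞) + (δ : ℝ≥0∞) = (ε : ℝ≥0∞) := by
      rw [← ENNReal.coe_add, hδdef, add_halves]
    set B := chebMDual (fun x y : X => edist x y) S S with hBdef
    have hBlt : (⨅ m : ℕ, ⨅ (_ : 1 ≤ m), chebMnDual (fun x y : X => edist x y) m S S)
        < B + δ := ENNReal.lt_add_right hBt.ne (by exact_mod_cast hδpos.ne')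
    obtain ⟨m, hmlt⟩ := iInf_lt_iff.mp hBlt
    obtain ⟨hm, hmlt2⟩ := iInf_lt_iff.mp hmlt
    have hmlt3 : (⨅ w : Fin m → S,
        ⨆ x : S, (∑ j, edist (x : X) ((w j : X))) / (m : ℝ≥0∞)) < B + δ := hmlt2
    obtain ⟨w, hwlt⟩ := iInf_lt_iff.mp hmlt3
    have hwj : ∀ j : Fin m, ‖(w j : X)‖ = 1 := fun j => hSmem _ (w j).2
    choose N v hvE hvn hvd using fun j : Fin m =>
      exists_unit_approx E hdense (w j) (hwj j) (ε := (δ : ℝ)) (by exact_mod_cast hδpos)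
    set N₀ : ℕ := Finset.univ.sup N with hN₀
    have hev : ∀ n, N₀ ≤ n → ρ n ≤ (B + δ) + δ := by
      intro n hn
      have hvEn : ∀ j, v j ∈ E n := fun j =>
        hmono ((Finset.le_sup (Finset.mem_univ j)).trans hn) (hvE j)
      set T : Set X := {x : X | x ∈ E n ∧ ‖x‖ = 1} with hTdef
      set v' : Fin m → T := fun j => ⟨v j, hvEn j, hvn j⟩ with hv'
      have hed : ∀ j, edist (v j) (w j : X) ≤ (δ : ℝ≥0∞) := fun j => by
        rw [edist_comm, edist_dist]
        exact (ENNReal.ofReal_le_ofReal (hvd j)).trans_eq ENNReal.ofReal_coe_nnreal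
      calc ρ n ≤ chebMDual (fun x y : X => edist x y) T T := (hρ n).2
        _ ≤ chebMnDual (fun x y : X => edist x y) m T T :=
            iInf_le_of_le m (iInf_le _ hm)
        _ ≤ ⨆ x : T, (∑ j, edist (x : X) (v j)) / (m : ℝ≥0∞) := by
            rw [chebMnDual]; exact iInf_le (fun w' : Fin m → T =>
          ⨆ x : T, (∑ j, edist (x : X) ((w' j : X))) / (m : ℝ≥0∞)) v'
        _ ≤ (⨆ x : S, (∑ j, edist (x : X) ((w j : X))) / (m : ℝ≥0∞)) + δ := by
            refine iSup_le fun x => ?_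
            refine le_trans (avg_edist_le hm (x : X) v (fun j => (w j : X)) hed) ?_
            exact add_le_add_left (le_iSup
              (fun y : S => (∑ j, edist (y : X) ((w j : X))) / (m : ℝ≥0∞))
              ⟨(x : X), hTS n x.2⟩) _
        _ ≤ (B + δ) + δ := add_le_add_left hwlt.le _
    by_contra hcon
    push_neg at hcon
    obtain ⟨n, hn1, hn2⟩ := ((hfreq _ (Ioi_mem_nhds hcon)).and_eventually
      (Filter.eventually_ge_atTop N₀)).exists
    have h1 : ρ n ≤ B + ε := by
      rw [← hsum, ← add_assoc]; exact hev n hn2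
    exact absurd h1 (not_le.mpr (Set.mem_Ioi.mp hn1))
end

section
/- (E. and G. Szekeres) Let X be a real normed space and let K ⊆ X be a nonempty compact convex set, regarded with the kernel k(x,y) := ‖x−y‖. Let ρ(K) := inf_{c∈K} sup_{x∈K} ‖x−c‖ be the Chebyshev out-radius of K (the radius of the smallest closed ball with centre in K containing K). Then the rendezvous interval of K reduces to the single point ρ(K): M(K) = M̄(K) = ρ(K). -/
open MeasureTheory ENNReal
open scoped BigOperators

open Rendezvous


section Aux

open Metric Filter

lemma mul_div_cancel_left'' {c : ℝ≥0∞} (h0 : c ≠ 0) (ht : c ≠ ∞) (a : ℝ≥0∞) :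
    (c * a) / c = a := by
  rw [mul_comm, div_eq_mul_inv, mul_assoc, ← div_eq_mul_inv, ENNReal.div_self h0 ht, mul_one]

lemma sum_div' {ι : Type*} (s : Finset ι) (f : ι → ℝ≥0∞) (c : ℝ≥0∞) :
    (∑ i ∈ s, f i) / c = ∑ i ∈ s, f i / c := by
  simp only [div_eq_mul_inv, Finset.sum_mul]

lemma chebMn_le_chebMnDual {X : Type*} (k : X → X → ℝ≥0∞)
    (hsymm : ∀ x y, k x y = k y x) {n m : ℕ} (hn : n ≠ 0) (hm : m ≠ 0) (K : Set X) :
    chebMn k n K K ≤ chebMnDual k m K K := by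
  have hn' : (n : ℝ≥0∞) ≠ 0 := by exact_mod_cast hn
  have hm' : (m : ℝ≥0∞) ≠ 0 := by exact_mod_cast hm
  rw [chebMn, chebMnDual]
  refine iSup_le fun w => le_iInf fun v => ?_
  set c : ℝ≥0∞ := ⨅ x : K, (∑ j, k (x : X) ((w j : X))) / (n : ℝ≥0∞) with hc
  set R : ℝ≥0∞ := ⨆ x : K, (∑ i, k (x : X) ((v i : X))) / (m : ℝ≥0∞) with hR
  set S : ℝ≥0∞ := ∑ i : Fin m, ∑ j : Fin n, k ((v i : X)) ((w j : X)) with hS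
  have h1 : c ≤ S / ((m : ℝ≥0∞) * n) := by
    have hle : (m : ℝ≥0∞) * c ≤ S / (n : ℝ≥0∞) := by
      calc (m : ℝ≥0∞) * c = ∑ _i : Fin m, c := by
            simp [Finset.sum_const, nsmul_eq_mul]
        _ ≤ ∑ i : Fin m, (∑ j, k ((v i : X)) ((w j : X))) / (n : ℝ≥0∞) :=
            Finset.sum_le_sum fun i _ => iInf_le _ (v i)
        _ = S / (n : ℝ≥0∞) := (sum_div' _ _ _).symm
    calc c = ((m : ℝ≥0∞) * c) / m := (mul_div_cancel_left'' hm' (natCast_ne_top m) c).symm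
      _ ≤ (S / n) / m := ENNReal.div_le_div_right hle _
      _ = S / ((m : ℝ≥0∞) * n) := by
          rw [div_eq_mul_inv, div_eq_mul_inv, div_eq_mul_inv, mul_assoc,
            ← ENNReal.mul_inv (Or.inl hn') (Or.inl (natCast_ne_top n)), mul_comm (n : ℝ≥0∞)]
  have h2 : S / ((m : ℝ≥0∞) * n) ≤ R := by
    have hS' : S = ∑ j : Fin n, ∑ i : Fin m, k ((w j : X)) ((v i : X)) := by
      rw [hS, Finset.sum_comm]
      exact Finset.sum_congr rfl fun j _ => Finset.sum_congr rfl fun i _ => hsymm _ _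
    have hle : S ≤ (n : ℝ≥0∞) * ((m : ℝ≥0∞) * R) := by
      rw [hS']
      calc ∑ j : Fin n, ∑ i : Fin m, k ((w j : X)) ((v i : X))
          ≤ ∑ _j : Fin n, (m : ℝ≥0∞) * R := by
            refine Finset.sum_le_sum fun j _ => ?_
            have : (∑ i, k ((w j : X)) ((v i : X))) / (m : ℝ≥0∞) ≤ R :=
              le_iSup (fun x : K => (∑ i, k (x : X) ((v i : X))) / (m : ℝ≥0∞)) (w j)
            calc ∑ i, k ((w j : X)) ((v i : X))
                = (m : ℝ≥0∞) * ((∑ i, k ((w j : X)) ((v i : X))) / (m : ℝ≥0∞)) := by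
                  rw [ENNReal.mul_div_cancel hm' (natCast_ne_top m)]
              _ ≤ (m : ℝ≥0∞) * R := by exact mul_le_mul_right this _
        _ = (n : ℝ≥0∞) * ((m : ℝ≥0∞) * R) := by simp [Finset.sum_const, nsmul_eq_mul]
    calc S / ((m : ℝ≥0∞) * n) ≤ ((n : ℝ≥0∞) * ((m : ℝ≥0∞) * R)) / ((m : ℝ≥0∞) * n) :=
          ENNReal.div_le_div_right hle _
      _ = R := by
          rw [← mul_assoc, mul_comm (n : ℝ≥0∞) ((m : ℝ≥0∞))]
          exact mul_div_cancel_left'' (by simp [hm', hn']) (by finiteness) R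
  exact h1.trans h2

lemma chebMnDual_one {X : Type*} [PseudoEMetricSpace X] (K : Set X) :
    chebMnDual (fun x y : X => edist x y) 1 K K = ⨅ c ∈ K, ⨆ x ∈ K, edist x c := by
  rw [chebMnDual]
  have h : ∀ w : Fin 1 → K, (⨆ x : K, (∑ j : Fin 1, edist (x : X) ((w j : X))) / ((1:ℕ) : ℝ≥0∞))
      = ⨆ x : K, edist (x : X) ((w 0 : X)) := by
    intro w; simp [Fin.sum_univ_one]
  simp_rw [h]
  rw [show (⨅ c ∈ K, ⨆ x ∈ K, edist x c) = ⨅ c : K, ⨆ x : K, edist (x : X) (c : X) by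
    rw [iInf_subtype']; exact iInf_congr fun c => by rw [iSup_subtype']]
  exact le_antisymm (le_iInf fun c => iInf_le _ (fun _ => c)) (le_iInf fun w => iInf_le _ (w 0))

lemma sum_get_flatten {α : Type*} (m : ℕ) (c : Fin m → ℕ) (g : Fin m → α) (f : α → ℝ)
    (l : List α) (hl : l = (List.ofFn (fun i => List.replicate (c i) (g i))).flatten) :
    ∑ j : Fin l.length, f (l.get j) = ∑ i, (c i : ℝ) * f (g i) := by
  have h1 : ∑ j : Fin l.length, f (l.get j) = (l.map f).sum := by
    simp only [List.get_eq_getElem]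
    exact Fin.sum_univ_fun_getElem l f
  rw [h1, hl, List.map_flatten, List.map_ofFn, List.sum_flatten, List.map_ofFn, List.sum_ofFn]
  refine Finset.sum_congr rfl fun i _ => ?_
  simp [Function.comp, List.map_replicate, List.sum_replicate, nsmul_eq_mul]

lemma length_flatten' {α : Type*} (m : ℕ) (c : Fin m → ℕ) (g : Fin m → α) :
    ((List.ofFn (fun i => List.replicate (c i) (g i))).flatten).length = ∑ i, c i := by
  rw [List.length_flatten]
  simp [List.map_ofFn, Function.comp, List.sum_ofFn]


lemma separation_weights {X : Type*} [NormedAddCommGroup X] [NormedSpace ℝ X] {K : Set X}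
    (hne : K.Nonempty) (hconv : Convex ℝ K) {m : ℕ} (y : Fin m → X) (v : ℝ)
    (hv : ∀ x ∈ K, ∃ i, v ≤ dist x (y i)) :
    ∃ p : Fin m → ℝ, (∀ i, 0 ≤ p i) ∧ (∑ i, p i = 1) ∧
      ∀ x ∈ K, v ≤ ∑ i, p i * dist x (y i) := by
  classical
  set A : Set (Fin m → ℝ) := {φ | ∃ x ∈ K, ∀ i, dist x (y i) ≤ φ i} with hA
  set B : Set (Fin m → ℝ) := {φ | ∀ i, φ i < v} with hB
  have hAconv : Convex ℝ A := by
    rintro φ ⟨x, hx, hφ⟩ ψ ⟨x', hx', hψ⟩ a b ha hb hab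
    refine ⟨a • x + b • x', hconv hx hx' ha hb hab, fun i => ?_⟩
    have hkey : a • x + b • x' - y i = a • (x - y i) + b • (x' - y i) := by
      have h1 : a • y i + b • y i = y i := by
        rw [← add_smul, hab, one_smul]
      calc a • x + b • x' - y i = a • x + b • x' - (a • y i + b • y i) := by rw [h1]
        _ = a • (x - y i) + b • (x' - y i) := by rw [smul_sub, smul_sub]; abel
    calc dist (a • x + b • x') (y i) = ‖a • (x - y i) + b • (x' - y i)‖ := by
          rw [dist_eq_norm, hkey]
      _ ≤ a * ‖x - y i‖ + b * ‖x' - y i‖ := by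
          refine (norm_add_le _ _).trans ?_
          rw [norm_smul, norm_smul, Real.norm_eq_abs, Real.norm_eq_abs,
            abs_of_nonneg ha, abs_of_nonneg hb]
      _ ≤ a * φ i + b * ψ i := by
          gcongr
          · rw [← dist_eq_norm]; exact hφ i
          · rw [← dist_eq_norm]; exact hψ i
  have hBeq : B = ⋂ i, {φ : Fin m → ℝ | φ i < v} := by
    ext φ; simp [hB, Set.mem_iInter]
  have hBconv : Convex ℝ B := by
    rw [hBeq]
    exact convex_iInter fun i => convex_halfSpace_lt ⟨fun a b => rfl, fun c a => rfl⟩ v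
  have hBopen : IsOpen B := by
    rw [hBeq]
    exact isOpen_iInter_of_finite fun i =>
      isOpen_Iio.preimage (continuous_apply i)
  have hdisj : Disjoint B A := by
    rw [Set.disjoint_left]
    rintro φ hφB ⟨x, hx, hφ⟩
    obtain ⟨i, hi⟩ := hv x hx
    exact absurd ((hi.trans (hφ i))) (not_le.2 (hφB i))
  obtain ⟨f, u, hfB, hfA⟩ := geometric_hahn_banach_open hBconv hBopen hAconv hdisj
  set q : Fin m → ℝ := fun i => f ((Pi.single i (1:ℝ) : Fin m → ℝ)) with hq
  have hrepr : ∀ φ : Fin m → ℝ, f φ = ∑ i, φ i * q i := by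
    intro φ
    have hdecomp : φ = ∑ i, φ i • (Pi.single i (1:ℝ) : Fin m → ℝ) := by
      funext j
      simp [Finset.sum_apply, Pi.single_apply]
    calc f φ = f (∑ i, φ i • (Pi.single i (1:ℝ) : Fin m → ℝ)) := by rw [← hdecomp]
      _ = ∑ i, φ i * q i := by
          rw [map_sum]
          exact Finset.sum_congr rfl fun i _ => by rw [_root_.map_smul, smul_eq_mul]
  obtain ⟨x₀, hx₀⟩ := hne
  set φ₀ : Fin m → ℝ := fun i => dist x₀ (y i) with hφ₀def
  have hφ₀A : φ₀ ∈ A := ⟨x₀, hx₀, fun i => le_rfl⟩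
  have hqnn : ∀ i, 0 ≤ q i := by
    intro i
    by_contra hqi
    push_neg at hqi
    set t : ℝ := (f φ₀ - u + 1) / (-q i) with ht
    have htpos : 0 < t := by
      apply div_pos _ (by linarith)
      have := hfA φ₀ hφ₀A
      linarith
    have hφ'A : φ₀ + t • (Pi.single i (1:ℝ) : Fin m → ℝ) ∈ A := by
      refine ⟨x₀, hx₀, fun j => ?_⟩
      have : (0:ℝ) ≤ (t • (Pi.single i (1:ℝ) : Fin m → ℝ)) j := by
        simp only [Pi.smul_apply, Pi.single_apply, smul_eq_mul]
        positivity
      simp only [Pi.add_apply]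
      linarith [le_refl (dist x₀ (y j))]
    have hval : f (φ₀ + t • (Pi.single i (1:ℝ) : Fin m → ℝ)) = f φ₀ + t * q i := by
      rw [map_add, _root_.map_smul, smul_eq_mul]
    have hne' : -q i ≠ 0 := by linarith
    have h1 : t * -q i = f φ₀ - u + 1 := by
      rw [ht]; exact div_mul_cancel₀ _ hne'
    have htq : t * q i = -(f φ₀ - u + 1) := by linarith
    have := hfA _ hφ'A
    rw [hval, htq] at this
    linarith
  set Q : ℝ := ∑ i, q i with hQ
  have hQnn : 0 ≤ Q := Finset.sum_nonneg fun i _ => hqnn i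
  have hQpos : 0 < Q := by
    rcases hQnn.lt_or_eq with h | h
    · exact h
    · exfalso
      have hall : ∀ i ∈ Finset.univ, q i = 0 :=
        (Finset.sum_eq_zero_iff_of_nonneg fun i _ => hqnn i).1 h.symm
      have hf0 : ∀ φ, f φ = 0 := by
        intro φ; rw [hrepr]
        exact Finset.sum_eq_zero fun i _ => by rw [hall i (Finset.mem_univ i), mul_zero]
      have hu1 : u ≤ 0 := by
        have := hfA φ₀ hφ₀A; rw [hf0] at this; linarith
      have hu2 : 0 < u := by
        have hb : (fun _ => v - 1 : Fin m → ℝ) ∈ B := fun i => by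
          show v - 1 < v; linarith
        have := hfB _ hb; rw [hf0] at this; linarith
      linarith
  have hvQ : v * Q ≤ u := by
    by_contra h
    push_neg at h
    obtain ⟨c, hc1, hc2⟩ := exists_between ((div_lt_iff₀ hQpos).2 h)
    have hb : (fun _ => c : Fin m → ℝ) ∈ B := fun i => hc2
    have h1 := hfB _ hb
    rw [hrepr] at h1
    have h2 : (∑ i, (fun _ => c : Fin m → ℝ) i * q i) = c * Q := by
      simp [← Finset.mul_sum, hQ]
    rw [h2] at h1
    have h3 : u < c * Q := (div_lt_iff₀ hQpos).1 hc1
    linarith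
  refine ⟨fun i => q i / Q, fun i => div_nonneg (hqnn i) hQnn, ?_, ?_⟩
  · rw [← Finset.sum_div, ← hQ, div_self hQpos.ne']
  · intro x hx
    have hxA : (fun i => dist x (y i)) ∈ A := ⟨x, hx, fun i => le_rfl⟩
    have := hfA _ hxA
    rw [hrepr] at this
    have hsum : ∑ i, q i / Q * dist x (y i) = (∑ i, dist x (y i) * q i) / Q := by
      rw [Finset.sum_div]
      exact Finset.sum_congr rfl fun i _ => by ring
    rw [hsum, le_div_iff₀ hQpos]
    calc v * Q ≤ u := hvQ
      _ ≤ ∑ i, dist x (y i) * q i := this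
lemma exists_good_list {X : Type*} [NormedAddCommGroup X] [NormedSpace ℝ X] {K : Set X}
    (hne : K.Nonempty) (hcpt : IsCompact K) (hconv : Convex ℝ K) (ρ : ℝ)
    (hρfar : ∀ x ∈ K, ∃ z ∈ K, ρ ≤ dist z x) {c₀ : X} (hc₀ : c₀ ∈ K)
    {ε : ℝ} (hε : 0 < ε) :
    ∃ l : List ↥K, 1 ≤ l.length ∧
      ∀ x ∈ K, (l.length : ℝ) * (ρ - ε) ≤ ∑ j : Fin l.length, dist x ((l.get j : X)) := by
  classical
  set δ : ℝ := ε / 3 with hδdef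
  have hδ : 0 < δ := by positivity
  obtain ⟨t, htK, htfin, htcover⟩ := hcpt.finite_cover_balls hδ
  obtain ⟨m, yemb, hyrange⟩ := htfin.fin_embedding
  set y : Fin m → X := fun i => yemb i with hydef
  have hyK : ∀ i, y i ∈ K := fun i => htK (hyrange ▸ Set.mem_range_self i)
  set v : ℝ := ρ - δ with hvdef
  have hv : ∀ x ∈ K, ∃ i, v ≤ dist x (y i) := by
    intro x hx
    obtain ⟨z, hz, hzρ⟩ := hρfar x hx
    have hzcov := htcover hz
    rw [Set.mem_iUnion₂] at hzcov
    obtain ⟨c, hct, hzball⟩ := hzcov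
    obtain ⟨i, hi⟩ : ∃ i, y i = c := by
      have : c ∈ Set.range yemb := hyrange ▸ hct
      obtain ⟨i, hi⟩ := this
      exact ⟨i, hi⟩
    refine ⟨i, ?_⟩
    have h1 : dist z (y i) < δ := by rw [hi]; exact mem_ball.1 hzball
    have h2 : dist z x ≤ dist z (y i) + dist (y i) x := dist_triangle _ _ _
    have h3 : dist x (y i) = dist (y i) x := dist_comm _ _
    linarith
  by_cases hvpos : v ≤ 0
  · refine ⟨[⟨c₀, hc₀⟩], by simp, fun x hx => ?_⟩
    have : ∑ j : Fin ([⟨c₀, hc₀⟩] : List ↥K).length, dist x (([⟨c₀, hc₀⟩] : List ↥K).get j : X)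
        = dist x c₀ := by simp
    rw [this]
    have : (([⟨c₀, hc₀⟩] : List ↥K).length : ℝ) = 1 := by simp
    rw [this, one_mul]
    have := dist_nonneg (x := x) (y := c₀)
    have hδε : δ ≤ ε := by rw [hδdef]; linarith
    linarith
  push_neg at hvpos
  obtain ⟨p, hp0, hp1, hpv⟩ := separation_weights hne hconv y v hv
  set N : ℕ := max 1 ⌈(m : ℝ) * v / δ⌉₊ with hNdef
  have hN1 : 1 ≤ N := le_max_left _ _
  have hNv : (m : ℝ) * v ≤ δ * N := by
    have h1 : (m : ℝ) * v / δ ≤ (⌈(m : ℝ) * v / δ⌉₊ : ℝ) := Nat.le_ceil _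
    have h2 : ((⌈(m : ℝ) * v / δ⌉₊ : ℕ) : ℝ) ≤ (N : ℝ) := by
      exact_mod_cast le_max_right 1 _
    have := (div_le_iff₀ hδ).1 (h1.trans h2)
    linarith
  set cf : Fin m → ℕ := fun i => ⌈p i * N⌉₊ with hcfdef
  have hci : ∀ i, (p i * N : ℝ) ≤ cf i := fun i => Nat.le_ceil _
  have hci' : ∀ i, (cf i : ℝ) ≤ p i * N + 1 := fun i =>
    le_of_lt (Nat.ceil_lt_add_one (mul_nonneg (hp0 i) (Nat.cast_nonneg N)))
  set n : ℕ := ∑ i, cf i with hndef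
  have hcast : (n : ℝ) = ∑ i, (cf i : ℝ) := by rw [hndef]; push_cast; ring
  have hnN : (N : ℝ) ≤ (n : ℝ) := by
    rw [hcast]
    calc (N : ℝ) = ∑ i, p i * N := by rw [← Finset.sum_mul, hp1, one_mul]
      _ ≤ ∑ i, (cf i : ℝ) := Finset.sum_le_sum fun i _ => hci i
  have hn_le : (n : ℝ) ≤ N + m := by
    rw [hcast]
    calc ∑ i, (cf i : ℝ) ≤ ∑ i, (p i * N + 1) := Finset.sum_le_sum fun i _ => hci' i
      _ = N + m := by rw [Finset.sum_add_distrib, ← Finset.sum_mul, hp1, one_mul]; simp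
  set l : List ↥K := (List.ofFn (fun i => List.replicate (cf i) (⟨y i, hyK i⟩ : ↥K))).flatten
    with hldef
  have hlen : l.length = n := length_flatten' m cf _
  have hlen1 : 1 ≤ l.length := by
    rw [hlen]
    have : (1 : ℝ) ≤ (n : ℝ) := le_trans (by exact_mod_cast hN1) hnN
    exact_mod_cast this
  refine ⟨l, hlen1, fun x hx => ?_⟩
  have hsum : ∑ j : Fin l.length, dist x ((l.get j : X)) = ∑ i, (cf i : ℝ) * dist x (y i) :=
    sum_get_flatten m cf _ (fun z : ↥K => dist x (z : X)) l hldef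
  have key1 : (N : ℝ) * v ≤ ∑ i, (cf i : ℝ) * dist x (y i) := by
    calc (N : ℝ) * v ≤ (N : ℝ) * ∑ i, p i * dist x (y i) :=
          mul_le_mul_of_nonneg_left (hpv x hx) (by positivity)
      _ = ∑ i, (p i * N) * dist x (y i) := by
          rw [Finset.mul_sum]
          exact Finset.sum_congr rfl fun i _ => by ring
      _ ≤ ∑ i, (cf i : ℝ) * dist x (y i) :=
          Finset.sum_le_sum fun i _ => mul_le_mul_of_nonneg_right (hci i) dist_nonneg
  have key2 : (n : ℝ) * (ρ - ε) ≤ (N : ℝ) * v := by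
    have hρε : ρ - ε = v - 2 * δ := by rw [hvdef, hδdef]; ring
    rw [hρε]
    have hn0 : (0:ℝ) ≤ n := Nat.cast_nonneg n
    have hN0 : (0:ℝ) ≤ N := Nat.cast_nonneg N
    have hm0 : (0:ℝ) ≤ m := Nat.cast_nonneg m
    rcases le_or_gt (v - 2*δ) 0 with hc | hc
    · have := mul_nonpos_of_nonneg_of_nonpos hn0 hc
      nlinarith
    · nlinarith [hn_le, hNv, hnN]
  rw [hsum, hlen]
  linarith
end Aux

/-- E. and G. Szekeres: For a nonempty compact convex subset `K` of a
real normed space, with the kernel `k(x,y) = ‖x-y‖`, the rendezvous interval of `K`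
reduces to the single point `ρ(K) = inf_{c ∈ K} sup_{x ∈ K} ‖x-c‖`, the Chebyshev
out-radius of `K`. -/
theorem szekeres_rendezvous_eq_chebyshevRadius {X : Type*} [NormedAddCommGroup X]
    [NormedSpace ℝ X] (K : Set X) (hne : K.Nonempty) (hcpt : IsCompact K)
    (hconv : Convex ℝ K) :
    chebM (fun x y : X => edist x y) K K = (⨅ c ∈ K, ⨆ x ∈ K, edist x c) ∧
    chebMDual (fun x y : X => edist x y) K K = (⨅ c ∈ K, ⨆ x ∈ K, edist x c) := by
  classical
  set r : X → ℝ := fun c => sSup ((fun x => dist x c) '' K) with hrdef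
  have hcont : ∀ c : X, Continuous fun x : X => dist x c := fun c =>
    continuous_id.dist continuous_const
  have hbdd : ∀ c : X, BddAbove ((fun x => dist x c) '' K) := fun c =>
    (hcpt.image (hcont c)).bddAbove
  have hrle : ∀ c : X, ∀ x ∈ K, dist x c ≤ r c := fun c x hx => le_csSup (hbdd c) ⟨x, hx, rfl⟩
  have hrmem : ∀ c : X, ∃ x ∈ K, r c = dist x c := by
    intro c
    obtain ⟨x, hx, hxe⟩ := (hcpt.image (hcont c)).sSup_mem (hne.image _)
    exact ⟨x, hx, hxe.symm⟩
  have hlip : LipschitzWith 1 r := by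
    apply LipschitzWith.of_dist_le_mul
    intro a b
    have hab : ∀ a b : X, r a ≤ r b + dist a b := by
      intro a b
      refine csSup_le (hne.image _) ?_
      rintro d ⟨x, hx, rfl⟩
      have h1 : dist x a ≤ dist x b + dist b a := dist_triangle _ _ _
      have h2 := hrle b x hx
      have h3 : dist b a = dist a b := dist_comm _ _
      linarith
    rw [NNReal.coe_one, one_mul, Real.dist_eq, abs_sub_le_iff]
    constructor
    · have := hab a b; linarith
    · have := hab b a; have h3 : dist b a = dist a b := dist_comm _ _; linarith
  obtain ⟨c₀, hc₀K, hc₀min'⟩ := hcpt.exists_isMinOn hne hlip.continuous.continuousOn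
  have hc₀min : ∀ x ∈ K, r c₀ ≤ r x := fun x hx => hc₀min' hx
  set ρ : ℝ := r c₀ with hρdef
  have hρfar : ∀ x ∈ K, ∃ z ∈ K, ρ ≤ dist z x := by
    intro x hx
    obtain ⟨z, hz, hze⟩ := hrmem x
    exact ⟨z, hz, by rw [← hze]; exact hc₀min x hx⟩
  have hsupc : ∀ c ∈ K, (⨆ x ∈ K, edist x c) = ENNReal.ofReal (r c) := by
    intro c hc
    apply le_antisymm
    · refine iSup₂_le fun x hx => ?_
      rw [edist_dist]; exact ENNReal.ofReal_le_ofReal (hrle c x hx)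
    · obtain ⟨z, hz, hze⟩ := hrmem c
      rw [hze, ← edist_dist]
      exact le_iSup₂ (f := fun x (_ : x ∈ K) => edist x c) z hz
  have htarget : (⨅ c ∈ K, ⨆ x ∈ K, edist x c) = ENNReal.ofReal ρ := by
    apply le_antisymm
    · exact (iInf₂_le c₀ hc₀K).trans_eq (hsupc c₀ hc₀K)
    · refine le_iInf₂ fun c hc => ?_
      rw [hsupc c hc]
      exact ENNReal.ofReal_le_ofReal (hc₀min c hc)
  have hdual_le : chebMDual (fun x y : X => edist x y) K K ≤ ENNReal.ofReal ρ := by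
    rw [← htarget, ← chebMnDual_one K, chebMDual]
    exact iInf₂_le 1 le_rfl
  have hM_le : chebM (fun x y : X => edist x y) K K ≤
      chebMDual (fun x y : X => edist x y) K K := by
    rw [chebM, chebMDual]
    refine iSup₂_le fun n hn => le_iInf₂ fun m hm => ?_
    exact chebMn_le_chebMnDual _ (fun x y => edist_comm x y)
      (Nat.one_le_iff_ne_zero.1 hn) (Nat.one_le_iff_ne_zero.1 hm) K
  have hge : ENNReal.ofReal ρ ≤ chebM (fun x y : X => edist x y) K K := by
    have key : ∀ ε : ℝ, 0 < ε →
        ENNReal.ofReal (ρ - ε) ≤ chebM (fun x y : X => edist x y) K K := by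
      intro ε hε
      obtain ⟨l, hl1, hl⟩ := exists_good_list hne hcpt hconv ρ hρfar hc₀K hε
      have hn0 : (l.length : ℝ≥0∞) ≠ 0 := by
        exact_mod_cast Nat.one_le_iff_ne_zero.1 hl1
      rw [chebM]
      refine le_iSup₂_of_le l.length hl1 ?_
      rw [chebMn]
      refine le_iSup_of_le l.get (le_iInf fun x => ?_)
      have hx := hl (x : X) x.2
      have hsum : (∑ j : Fin l.length, edist (x : X) ((l.get j : X)))
          = ENNReal.ofReal (∑ j : Fin l.length, dist (x : X) ((l.get j : X))) := by
        rw [ENNReal.ofReal_sum_of_nonneg (fun _ _ => dist_nonneg)]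
        exact Finset.sum_congr rfl fun j _ => edist_dist _ _
      calc ENNReal.ofReal (ρ - ε)
          = ((l.length : ℝ≥0∞) * ENNReal.ofReal (ρ - ε)) / l.length :=
            (mul_div_cancel_left'' hn0 (natCast_ne_top _) _).symm
        _ ≤ (∑ j : Fin l.length, edist (x : X) ((l.get j : X))) / l.length := by
            apply ENNReal.div_le_div_right
            rw [hsum, ← ENNReal.ofReal_natCast l.length,
              ← ENNReal.ofReal_mul (Nat.cast_nonneg l.length)]
            exact ENNReal.ofReal_le_ofReal hx
    have hlim : Filter.Tendsto (fun j : ℕ => ENNReal.ofReal (ρ - 1 / ((j : ℝ) + 1)))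
        Filter.atTop (nhds (ENNReal.ofReal ρ)) := by
      apply (ENNReal.continuous_ofReal.tendsto ρ).comp
      have h1 : Filter.Tendsto (fun j : ℕ => ρ - 1 / ((j : ℝ) + 1)) Filter.atTop
          (nhds (ρ - 0)) :=
        Filter.Tendsto.sub tendsto_const_nhds tendsto_one_div_add_atTop_nhds_zero_nat
      simpa using h1
    exact le_of_tendsto' hlim fun j => key _ (by positivity)
  have h1 : chebM (fun x y : X => edist x y) K K = ENNReal.ofReal ρ :=
    le_antisymm (hM_le.trans hdual_le) hge
  have h2 : chebMDual (fun x y : X => edist x y) K K = ENNReal.ofReal ρ :=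
    le_antisymm hdual_le (hge.trans hM_le)
  rw [htarget]
  exact ⟨h1, h2⟩
end

section
/- Let K be a nonempty compact Hausdorff topological space without isolated points, and let C(K) be the Banach space of real- or complex-valued continuous functions on K with the supremum norm. Then, with the kernel k(f,g) := ‖f−g‖_∞ on the unit sphere S_{C(K)}, the dual Chebyshev constant satisfies M̄(S_{C(K)}) = 2. -/
open MeasureTheory ENNReal
open scoped BigOperators

open Rendezvous


open Set

section Aux

variable {K : Type*} [TopologicalSpace K] [CompactSpace K] [T2Space K] [Nonempty K]
variable {𝕜 : Type*} [RCLike 𝕜]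

/-- In a T1 space with no isolated point, nonempty open sets are infinite. -/
lemma aux_open_infinite (hniso : ∀ x : K, ¬ IsOpen ({x} : Set K))
    {U : Set K} (hU : IsOpen U) (hne : U.Nonempty) : U.Infinite := by
  by_contra h
  rw [Set.not_infinite] at h
  have hfin := h
  obtain ⟨u, hu⟩ := hne
  have h1 : (U \ {u}).Finite := hfin.diff
  have h2 : IsOpen (U ∩ (U \ {u})ᶜ) := hU.inter h1.isClosed.isOpen_compl
  have h3 : U ∩ (U \ {u})ᶜ = {u} := by
    ext x
    simp only [Set.mem_inter_iff, Set.mem_compl_iff, Set.mem_diff, Set.mem_singleton_iff]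
    constructor
    · rintro ⟨hxU, h⟩; by_contra hxu; exact h ⟨hxU, hxu⟩
    · rintro rfl; exact ⟨hu, fun h => h.2 rfl⟩
  exact hniso u (h3 ▸ h2)

/-- Injective choice from a family of infinite sets. -/
lemma aux_inj_choice {α : Type*} : ∀ {n : ℕ} (U : Fin n → Set α), (∀ j, (U j).Infinite) →
    ∃ y : Fin n → α, Function.Injective y ∧ ∀ j, y j ∈ U j := by
  intro n
  induction n with
  | zero => exact fun U _ => ⟨Fin.elim0, fun i => i.elim0, fun j => j.elim0⟩
  | succ m ih =>
    intro U hU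
    obtain ⟨y', hinj, hmem⟩ := ih (fun j => U j.succ) (fun j => hU j.succ)
    obtain ⟨y0, hy0U, hy0r⟩ := ((hU 0).diff (Set.finite_range y')).nonempty
    refine ⟨Fin.cons y0 y', ?_, ?_⟩
    · intro i j h
      induction i using Fin.cases with
      | zero =>
        induction j using Fin.cases with
        | zero => rfl
        | succ j =>
          rw [Fin.cons_zero, Fin.cons_succ] at h
          exact absurd ⟨j, h.symm⟩ hy0r
      | succ i =>
        induction j using Fin.cases with
        | zero =>
          rw [Fin.cons_zero, Fin.cons_succ] at h
          exact absurd ⟨i, h⟩ hy0r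
        | succ j => exact congrArg Fin.succ (hinj (by rwa [Fin.cons_succ, Fin.cons_succ] at h))
    · intro j
      induction j using Fin.cases with
      | zero => rw [Fin.cons_zero]; exact hy0U
      | succ j => rw [Fin.cons_succ]; exact hmem j

/-- Key: a point on the sphere far from all the `w j`. -/
lemma aux_far_point (hniso : ∀ x : K, ¬ IsOpen ({x} : Set K))
    {n : ℕ} (hn : 1 ≤ n) (w : Fin n → C(K, 𝕜)) (hw : ∀ j, ‖w j‖ = 1)
    {ε : ℝ} (hε : 0 < ε) :
    ∃ f : C(K, 𝕜), ‖f‖ = 1 ∧ ∀ j, 2 - ε ≤ ‖f - w j‖ := by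
  set δ := min ε 1 with hδdef
  have hδ0 : 0 < δ := lt_min hε one_pos
  have hδ1 : δ ≤ 1 := min_le_right _ _
  have hδε : δ ≤ ε := min_le_left _ _
  -- open sets where |w j| is large
  set U : Fin n → Set K := fun j => {y | 1 - δ < ‖w j y‖} with hUdef
  have hUopen : ∀ j, IsOpen (U j) := fun j =>
    isOpen_lt continuous_const (continuous_norm.comp (map_continuous (w j)))
  have hUne : ∀ j, (U j).Nonempty := by
    intro j
    by_contra h
    rw [Set.not_nonempty_iff_eq_empty] at h
    have : ∀ y, ‖w j y‖ ≤ 1 - δ := by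
      intro y
      by_contra hy
      have hyU : y ∈ U j := lt_of_not_ge hy
      rw [h] at hyU
      exact hyU
    have : ‖w j‖ ≤ 1 - δ := ((w j).norm_le (by linarith)).mpr this
    rw [hw j] at this; linarith
  obtain ⟨y, hyinj, hymem⟩ := aux_inj_choice U
    (fun j => aux_open_infinite hniso (hUopen j) (hUne j))
  -- bump functions
  have hφ : ∀ j : Fin n, ∃ φ : C(K, ℝ), φ (y j) = 1 ∧ ∀ i, i ≠ j → φ (y i) = 0 := by
    intro j
    have hs : IsClosed (y '' {i | i ≠ j}) := (Set.toFinite _).isClosed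
    have ht : IsClosed ({y j} : Set K) := isClosed_singleton
    have hd : Disjoint (y '' {i | i ≠ j}) ({y j} : Set K) := by
      rw [Set.disjoint_singleton_right]
      rintro ⟨i, hi, hiy⟩
      exact hi (hyinj hiy)
    obtain ⟨φ, hφ0, hφ1, _⟩ := exists_continuous_zero_one_of_isClosed hs ht hd
    exact ⟨φ, hφ1 rfl, fun i hi => hφ0 ⟨i, hi, rfl⟩⟩
  choose φ hφ1 hφ0 using hφ
  -- coefficients
  set c : Fin n → 𝕜 := fun j => -(w j (y j)) / ((‖w j (y j)‖ : ℝ) : 𝕜) with hcdef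
  have ht : ∀ j, (0:ℝ) < ‖w j (y j)‖ := fun j => lt_of_le_of_lt (by linarith) (hymem j)
  have hcnorm : ∀ j, ‖c j‖ = 1 := by
    intro j
    rw [hcdef]
    simp only [norm_div, norm_neg, RCLike.norm_ofReal, abs_of_pos (ht j)]
    exact div_self (ht j).ne'
  -- the function g
  set g : C(K, 𝕜) := ∑ j, c j • (ContinuousMap.mk (fun x => ((φ j x : ℝ) : 𝕜))
    (RCLike.continuous_ofReal.comp (map_continuous (φ j)))) with hgdef
  have hgy : ∀ j, g (y j) = c j := by
    intro j
    rw [hgdef]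
    simp only [ContinuousMap.coe_sum, Finset.sum_apply, ContinuousMap.coe_smul, Pi.smul_apply,
      ContinuousMap.coe_mk, smul_eq_mul]
    rw [Finset.sum_eq_single j]
    · rw [hφ1 j]; simp
    · intro i _ hi; rw [hφ0 i j hi.symm]; simp
    · intro h; exact absurd (Finset.mem_univ j) h
  -- truncation
  have hden : ∀ x : K, ((max 1 ‖g x‖ : ℝ) : 𝕜) ≠ 0 := by
    intro x
    rw [Ne, RCLike.ofReal_eq_zero]
    have : (1:ℝ) ≤ max 1 ‖g x‖ := le_max_left _ _
    linarith
  set f : C(K, 𝕜) := ContinuousMap.mk (fun x => g x / ((max 1 ‖g x‖ : ℝ) : 𝕜))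
    ((map_continuous g).div
      (RCLike.continuous_ofReal.comp (continuous_const.max (continuous_norm.comp (map_continuous g))))
      hden) with hfdef
  have hfx : ∀ x, ‖f x‖ ≤ 1 := by
    intro x
    rw [hfdef]
    simp only [ContinuousMap.coe_mk, norm_div, RCLike.norm_ofReal]
    have h1 : (1:ℝ) ≤ max 1 ‖g x‖ := le_max_left _ _
    rw [abs_of_pos (by linarith)]
    rw [div_le_one (by linarith)]
    exact le_max_right _ _
  have hfy : ∀ j, f (y j) = c j := by
    intro j
    rw [hfdef]
    simp only [ContinuousMap.coe_mk]
    rw [hgy j, hcnorm j, max_self]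
    simp
  have hfnorm : ‖f‖ = 1 := by
    refine le_antisymm ((f.norm_le zero_le_one).mpr hfx) ?_
    have := f.norm_coe_le_norm (y ⟨0, hn⟩)
    rw [hfy ⟨0, hn⟩, hcnorm ⟨0, hn⟩] at this
    exact this
  refine ⟨f, hfnorm, ?_⟩
  intro j
  have key : ‖f (y j) - w j (y j)‖ = 1 + ‖w j (y j)‖ := by
    rw [hfy j, hcdef]
    set a := w j (y j) with hadef
    set t := ‖a‖ with htdef
    have ht' : (0:ℝ) < t := ht j
    have hteq : -a / ((t : ℝ) : 𝕜) - a = -((((1 + t) / t : ℝ) : 𝕜) * a) := by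
      have htne : ((t:ℝ):𝕜) ≠ 0 := RCLike.ofReal_ne_zero.mpr ht'.ne'
      field_simp
      push_cast
      have h' : ((t:ℝ):𝕜) * ((t:ℝ):𝕜)⁻¹ = 1 := mul_inv_cancel₀ htne
      linear_combination (a + a * (t:𝕜)) * h'
    rw [hteq, norm_neg, norm_mul, RCLike.norm_ofReal, abs_of_pos (by positivity), ← htdef,
      div_mul_cancel₀ _ ht'.ne']
  have h2 : ‖f (y j) - w j (y j)‖ ≤ ‖f - w j‖ := by
    have := (f - w j).norm_coe_le_norm (y j)
    simpa using this
  have h3 : 1 - δ < ‖w j (y j)‖ := hymem j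
  linarith [key ▸ h2]

end Aux




/-- For a nonempty compact Hausdorff space `K` without isolated points,
and `C(K)` the Banach space of real- or complex-valued continuous functions with the
supremum norm, the dual Chebyshev constant of the unit sphere is
`M̄(S_{C(K)}) = 2` (kernel `k(f,g) = ‖f-g‖_∞`). -/
theorem chebMDual_sphere_continuousMap_eq_two {K : Type*} [TopologicalSpace K]
    [CompactSpace K] [T2Space K] [Nonempty K]
    (hniso : ∀ x : K, ¬ IsOpen ({x} : Set K))
    {𝕜 : Type*} [RCLike 𝕜] :
    chebMDual (fun f g : C(K, 𝕜) => edist f g)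
      {f : C(K, 𝕜) | ‖f‖ = 1} {f : C(K, 𝕜) | ‖f‖ = 1} = 2 := by
  set S : Set C(K, 𝕜) := {f : C(K, 𝕜) | ‖f‖ = 1} with hSdef
  have hone : (1 : C(K, 𝕜)) ∈ S := norm_one
  refine le_antisymm ?_ ?_
  · -- upper bound via n = 1
    refine iInf_le_of_le 1 (iInf_le_of_le le_rfl ?_)
    refine iInf_le_of_le (fun _ => ⟨1, hone⟩) (iSup_le ?_)
    rintro ⟨x, hx⟩
    have hd : dist x (1 : C(K, 𝕜)) ≤ 2 := by
      calc dist x 1 ≤ ‖x‖ + ‖(1 : C(K, 𝕜))‖ := by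
            rw [dist_eq_norm]; exact norm_sub_le _ _
        _ = 2 := by rw [hx, norm_one]; norm_num
    calc (∑ j : Fin 1, edist (x : C(K, 𝕜)) (1 : C(K, 𝕜))) / ((1 : ℕ) : ℝ≥0∞)
        = edist x (1 : C(K, 𝕜)) := by simp
      _ ≤ 2 := by
          rw [edist_dist]
          calc ENNReal.ofReal (dist x 1) ≤ ENNReal.ofReal 2 := ENNReal.ofReal_le_ofReal hd
            _ = 2 := by norm_num
  · -- lower bound
    refine le_iInf fun n => le_iInf fun hn => le_iInf fun w => ?_
    set T : ℝ≥0∞ := ⨆ x : S, (∑ j, edist (x : C(K, 𝕜)) ((w j : C(K, 𝕜)))) / (n : ℝ≥0∞) with hT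
    have key : ∀ δ : ℝ, 0 < δ → ENNReal.ofReal (2 - δ) ≤ T := by
      intro δ hδ
      obtain ⟨f, hf1, hff⟩ := aux_far_point hniso hn (fun j => (w j : C(K, 𝕜)))
        (fun j => (w j).2) hδ
      have hle : ENNReal.ofReal (2 - δ) ≤ (∑ j, edist f ((w j : C(K, 𝕜)))) / (n : ℝ≥0∞) := by
        rw [ENNReal.le_div_iff_mul_le (Or.inl (by exact_mod_cast Nat.one_le_iff_ne_zero.mp hn))
          (Or.inl (ENNReal.natCast_ne_top n))]
        have hterm : ∀ j, ENNReal.ofReal (2 - δ) ≤ edist f ((w j : C(K, 𝕜))) := by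
          intro j
          rw [edist_dist, dist_eq_norm]
          exact ENNReal.ofReal_le_ofReal (hff j)
        calc ENNReal.ofReal (2 - δ) * (n : ℝ≥0∞)
            = ∑ _j : Fin n, ENNReal.ofReal (2 - δ) := by
              rw [Finset.sum_const, Finset.card_univ, Fintype.card_fin, nsmul_eq_mul, mul_comm]
          _ ≤ ∑ j, edist f ((w j : C(K, 𝕜))) := Finset.sum_le_sum fun j _ => hterm j
      exact le_trans hle (le_iSup (fun x : S => (∑ j, edist (x : C(K, 𝕜)) ((w j : C(K, 𝕜)))) / (n : ℝ≥0∞)) ⟨f, hf1⟩)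
    by_contra hlt
    rw [not_le] at hlt
    have hTtop : T ≠ ⊤ := hlt.ne_top
    have hr : T.toReal < 2 := by
      have := ENNReal.toReal_lt_toReal hTtop (by norm_num : (2:ℝ≥0∞) ≠ ⊤) |>.mpr hlt
      simpa using this
    set r := T.toReal with hrdef
    have hδ : (0:ℝ) < (2 - r)/2 := by linarith
    have h1 := key ((2 - r)/2) hδ
    rw [ENNReal.ofReal_le_iff_le_toReal hTtop] at h1
    linarith
end
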